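/- Let H be a Hermitian operator on a finite-dimensional complex Hilbert space with spectral decomposition H = ∑_{μ∈ι} E_μ P_μ, let S ⊆ ι be nonempty, let γ > 0 and 0 ≤ Δ < γ/4 be such that E_ν − E_μ ≤ Δ for every ν ∈ S and every μ ∈ ι. Then for every operator A and every β > 0, ‖∑_{μ∈ι} ∑_{ν∈S} G_{β,γ}(E_ν − E_μ) P_μ A P_ν‖ ≤ (4|S|/√π)·(β/γ)·e^{−γ²/(64β²)}·‖A‖. -/

import Mathlib

open MeasureTheory Real

/-- `G_{β,γ}(ω) = (1/√π) ∫_{-∞}^{(ω-γ/2)/(2β)} e^{-x²} dx`, the convolution of a step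
function at `γ/2` with the Gaussian filter. -/
noncomputable def G (β γ ω : ℝ) : ℝ :=
  (1 / Real.sqrt π) * ∫ x in Set.Iio ((ω - γ / 2) / (2 * β)), Real.exp (-(x ^ 2))

lemma gauss_tail {s t : ℝ} (ht : 0 < t) (hst : s ≤ -t) :
    ∫ x in Set.Iio s, Real.exp (-(x ^ 2)) ≤ Real.exp (-(t ^ 2)) / (2 * t) := by
  have hint : IntegrableOn (fun x : ℝ => Real.exp (-(x ^ 2))) (Set.Iic s) := by
    have := (integrable_exp_neg_mul_sq one_pos).integrableOn (s := Set.Iic s)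
    simpa using this
  have hint' : IntegrableOn (fun x : ℝ => (-x / t) * Real.exp (-(x ^ 2))) (Set.Iic s) := by
    have h0 := (integrable_mul_exp_neg_mul_sq (b := 1) one_pos).const_mul (-(1 / t))
    have heq : (fun x : ℝ => (-(1 / t)) * (x * Real.exp (-1 * x ^ 2)))
        = fun x : ℝ => (-x / t) * Real.exp (-(x ^ 2)) := by
      funext x
      rw [neg_one_mul]
      ring
    rw [heq] at h0
    exact h0.integrableOn
  have hFTC : ∫ x in Set.Iic s, (-x / t) * Real.exp (-(x ^ 2))
      = Real.exp (-(s ^ 2)) / (2 * t) := by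
    have hderiv : ∀ x ∈ Set.Iic s,
        HasDerivAt (fun y : ℝ => Real.exp (-(y ^ 2)) / (2 * t))
          ((-x / t) * Real.exp (-(x ^ 2))) x := by
      intro x _
      have h1 : HasDerivAt (fun y : ℝ => -(y ^ 2)) (-(2 * x)) x := by
        simpa using (hasDerivAt_pow 2 x).fun_neg
      have h2 := (h1.exp).div_const (2 * t)
      refine h2.congr_deriv ?_
      ring
    have htend : Filter.Tendsto (fun y : ℝ => Real.exp (-(y ^ 2)) / (2 * t))
        Filter.atBot (nhds 0) := by
      have h1 : Filter.Tendsto (fun y : ℝ => -(y ^ 2)) Filter.atBot Filter.atBot := by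
        have h0 : Filter.Tendsto (fun y : ℝ => y ^ 2) Filter.atBot Filter.atTop := by
          have h2 := (Filter.tendsto_pow_atTop (α := ℝ) (n := 2) two_ne_zero).comp
            Filter.tendsto_neg_atBot_atTop
          have heq : ((fun x : ℝ => x ^ 2) ∘ fun y : ℝ => -y) = fun y : ℝ => y ^ 2 := by
            funext y; simp [Function.comp, neg_sq]
          rwa [heq] at h2
        exact Filter.tendsto_neg_atTop_atBot.comp h0
      have := (Real.tendsto_exp_atBot.comp h1).div_const (2 * t)
      simpa using this
    have := integral_Iic_of_hasDerivAt_of_tendsto' hderiv hint' htend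
    rw [this, sub_zero]
  calc ∫ x in Set.Iio s, Real.exp (-(x ^ 2))
      = ∫ x in Set.Iic s, Real.exp (-(x ^ 2)) := setIntegral_congr_set Iio_ae_eq_Iic
    _ ≤ ∫ x in Set.Iic s, (-x / t) * Real.exp (-(x ^ 2)) := by
        apply setIntegral_mono_on hint hint' measurableSet_Iic
        intro x hx
        have hx' : t ≤ -x := by
          have : x ≤ s := hx
          linarith
        have h1 : (1 : ℝ) ≤ -x / t := (le_div_iff₀ ht).mpr (by linarith)
        nlinarith [Real.exp_pos (-(x ^ 2))]
    _ = Real.exp (-(s ^ 2)) / (2 * t) := hFTC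
    _ ≤ Real.exp (-(t ^ 2)) / (2 * t) := by
        have h2 : t ^ 2 ≤ s ^ 2 := by nlinarith
        have h3 : -(s ^ 2) ≤ -(t ^ 2) := by linarith
        gcongr

lemma G_nonneg (β γ ω : ℝ) : 0 ≤ G β γ ω := by
  apply mul_nonneg (by positivity)
  exact setIntegral_nonneg measurableSet_Iio fun x _ => (Real.exp_pos _).le

lemma G_le {β γ Δ ω : ℝ} (hβ : 0 < β) (hγ : 0 < γ) (hΔγ : Δ < γ / 4) (hω : ω ≤ Δ) :
    G β γ ω ≤ 4 / Real.sqrt π * (β / γ) * Real.exp (-(γ ^ 2 / (64 * β ^ 2))) := by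
  have hπ : 0 < Real.sqrt π := Real.sqrt_pos.mpr Real.pi_pos
  set t : ℝ := γ / (8 * β) with ht_def
  have ht : 0 < t := by positivity
  have hst : (ω - γ / 2) / (2 * β) ≤ -t := by
    have h1 : -t = (-(γ / 4)) / (2 * β) := by rw [ht_def]; ring
    rw [h1, div_le_div_iff_of_pos_right (by positivity)]
    linarith
  have htail := gauss_tail ht hst
  have hG : G β γ ω ≤ (1 / Real.sqrt π) * (Real.exp (-(t ^ 2)) / (2 * t)) := by
    unfold G
    exact mul_le_mul_of_nonneg_left htail (by positivity)
  refine hG.trans (le_of_eq ?_)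
  have h2 : -(t ^ 2) = -(γ ^ 2 / (64 * β ^ 2)) := by rw [ht_def]; field_simp; ring
  rw [h2, ht_def]
  field_simp
  ring

lemma key_norm {V : Type*} [NormedAddCommGroup V] [InnerProductSpace ℂ V] [CompleteSpace V]
    {ι : Type*} [Fintype ι] (Pr : ι → (V →L[ℂ] V))
    (hPsa : ∀ μ, IsSelfAdjoint (Pr μ))
    (hPorth : ∀ μ ν, μ ≠ ν → Pr μ * Pr ν = 0)
    (hPsum : ∑ μ, Pr μ = 1)
    (g : ι → ℝ) (c : ℝ) (hc : 0 ≤ c) (hg : ∀ μ, |g μ| ≤ c) :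
    ‖∑ μ, g μ • Pr μ‖ ≤ c := by
  classical
  apply ContinuousLinearMap.opNorm_le_bound _ hc
  intro x
  have key : ∀ μ ν, (inner ℂ (Pr μ x) (Pr ν x) : ℂ)
      = if μ = ν then ((‖Pr μ x‖ ^ 2 : ℝ) : ℂ) else 0 := by
    intro μ ν
    by_cases h : μ = ν
    · subst h
      rw [if_pos rfl]
      push_cast
      exact inner_self_eq_norm_sq_to_K _
    · rw [if_neg h]
      have hsym := ContinuousLinearMap.isSelfAdjoint_iff_isSymmetric.mp (hPsa μ)
      calc (inner ℂ (Pr μ x) (Pr ν x) : ℂ) = inner ℂ x (Pr μ (Pr ν x)) := hsym _ _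
        _ = inner ℂ x ((Pr μ * Pr ν) x) := rfl
        _ = 0 := by rw [hPorth μ ν h]; simp
  have hBx : ((∑ μ, g μ • Pr μ) x) = ∑ μ, g μ • (Pr μ x) := by
    simp [ContinuousLinearMap.sum_apply]
  have hinner : (inner ℂ ((∑ μ, g μ • Pr μ) x) ((∑ μ, g μ • Pr μ) x) : ℂ)
      = ((∑ μ, (g μ) ^ 2 * ‖Pr μ x‖ ^ 2 : ℝ) : ℂ) := by
    rw [hBx, sum_inner]
    push_cast
    refine Finset.sum_congr rfl fun μ _ => ?_
    rw [inner_sum]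
    simp_rw [RCLike.real_smul_eq_coe_smul (K := ℂ), inner_smul_left, inner_smul_right,
      key, RCLike.conj_ofReal, mul_ite, mul_zero, Finset.sum_ite_eq, Finset.mem_univ,
      if_true]
    simp only [RCLike.ofReal_alg, Complex.real_smul, mul_one]
    push_cast
    ring
  have hxinner : (inner ℂ x x : ℂ) = ((∑ μ, ‖Pr μ x‖ ^ 2 : ℝ) : ℂ) := by
    have hxP : x = ∑ μ, Pr μ x := by
      rw [← ContinuousLinearMap.sum_apply, hPsum, ContinuousLinearMap.one_apply]
    nth_rewrite 1 [hxP]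
    nth_rewrite 2 [hxP]
    rw [sum_inner]
    push_cast
    refine Finset.sum_congr rfl fun μ _ => ?_
    rw [inner_sum]
    simp only [key, Finset.sum_ite_eq, Finset.mem_univ, if_true]
    push_cast
    ring
  have hnorm2' : ‖(∑ μ, g μ • Pr μ) x‖ ^ 2 = ∑ μ, (g μ) ^ 2 * ‖Pr μ x‖ ^ 2 := by
    have h2 := inner_self_eq_norm_sq (𝕜 := ℂ) (x := (∑ μ, g μ • Pr μ) x)
    rw [hinner] at h2
    simp only [RCLike.re_to_complex, Complex.ofReal_re] at h2
    exact h2.symm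
  have hx2' : ‖x‖ ^ 2 = ∑ μ, ‖Pr μ x‖ ^ 2 := by
    have h2 := inner_self_eq_norm_sq (𝕜 := ℂ) (x := x)
    rw [hxinner] at h2
    simp only [RCLike.re_to_complex, Complex.ofReal_re] at h2
    exact h2.symm
  have hle : ‖(∑ μ, g μ • Pr μ) x‖ ^ 2 ≤ c ^ 2 * ‖x‖ ^ 2 := by
    rw [hnorm2', hx2', Finset.mul_sum]
    refine Finset.sum_le_sum fun μ _ => ?_
    have h1 : (g μ) ^ 2 ≤ c ^ 2 := by nlinarith [hg μ, abs_nonneg (g μ), sq_abs (g μ)]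
    nlinarith [sq_nonneg ‖Pr μ x‖]
  nlinarith [norm_nonneg ((∑ μ, g μ • Pr μ) x), mul_nonneg hc (norm_nonneg x),
    norm_nonneg x]

theorem stmt12 {V : Type*} [NormedAddCommGroup V] [InnerProductSpace ℂ V]
    [FiniteDimensional ℂ V]
    {ι : Type*} [Fintype ι] (E : ι → ℝ) (Pr : ι → (V →L[ℂ] V))
    (hPsa : ∀ μ, IsSelfAdjoint (Pr μ))
    (hPidem : ∀ μ, Pr μ * Pr μ = Pr μ)
    (hPorth : ∀ μ ν, μ ≠ ν → Pr μ * Pr ν = 0)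
    (hPsum : ∑ μ, Pr μ = 1)
    (H : V →L[ℂ] V) (hH : H = ∑ μ, (E μ : ℂ) • Pr μ)
    (S : Finset ι) (hS : S.Nonempty)
    (γ Δ : ℝ) (hγ : 0 < γ) (hΔ0 : 0 ≤ Δ) (hΔγ : Δ < γ / 4)
    (hwidth : ∀ ν ∈ S, ∀ μ : ι, E ν - E μ ≤ Δ)
    (A : V →L[ℂ] V) (β : ℝ) (hβ : 0 < β) :
    ‖∑ μ, ∑ ν ∈ S, G β γ (E ν - E μ) • (Pr μ * A * Pr ν)‖ ≤
      4 * S.card / Real.sqrt π * (β / γ) * Real.exp (-(γ ^ 2 / (64 * β ^ 2))) * ‖A‖ := by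
  classical
  have hπ : 0 < Real.sqrt π := Real.sqrt_pos.mpr Real.pi_pos
  set c : ℝ := 4 / Real.sqrt π * (β / γ) * Real.exp (-(γ ^ 2 / (64 * β ^ 2))) with hc_def
  have hc : 0 ≤ c := by positivity
  have hGb : ∀ ν ∈ S, ∀ μ, |G β γ (E ν - E μ)| ≤ c := by
    intro ν hν μ
    rw [abs_of_nonneg (G_nonneg _ _ _)]
    exact G_le hβ hγ hΔγ (hwidth ν hν μ)
  have hP1 : ∀ ν : ι, ‖Pr ν‖ ≤ 1 := by
    intro ν
    have h := key_norm Pr hPsa hPorth hPsum (fun μ => if μ = ν then (1 : ℝ) else 0) 1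
      zero_le_one (fun μ => by split <;> simp)
    have heq : ∑ μ, (if μ = ν then (1 : ℝ) else 0) • Pr μ = Pr ν := by
      simp only [ite_smul, one_smul, zero_smul, Finset.sum_ite_eq', Finset.mem_univ, if_true]
    rwa [heq] at h
  have hB : ∀ ν ∈ S, ‖∑ μ, G β γ (E ν - E μ) • Pr μ‖ ≤ c := fun ν hν =>
    key_norm Pr hPsa hPorth hPsum _ c hc (hGb ν hν)
  have hswap : ∑ μ, ∑ ν ∈ S, G β γ (E ν - E μ) • (Pr μ * A * Pr ν)
      = ∑ ν ∈ S, (∑ μ, G β γ (E ν - E μ) • Pr μ) * (A * Pr ν) := by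
    rw [Finset.sum_comm]
    refine Finset.sum_congr rfl fun ν _ => ?_
    rw [Finset.sum_mul]
    refine Finset.sum_congr rfl fun μ _ => ?_
    rw [smul_mul_assoc, mul_assoc]
  rw [hswap]
  calc ‖∑ ν ∈ S, (∑ μ, G β γ (E ν - E μ) • Pr μ) * (A * Pr ν)‖
      ≤ ∑ ν ∈ S, ‖(∑ μ, G β γ (E ν - E μ) • Pr μ) * (A * Pr ν)‖ := norm_sum_le _ _
    _ ≤ ∑ ν ∈ S, c * ‖A‖ := by
        refine Finset.sum_le_sum fun ν hν => ?_
        have h1 := norm_mul_le (∑ μ, G β γ (E ν - E μ) • Pr μ) (A * Pr ν)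
        have h2 := norm_mul_le A (Pr ν)
        have h3 := hB ν hν
        have h4 := hP1 ν
        calc ‖(∑ μ, G β γ (E ν - E μ) • Pr μ) * (A * Pr ν)‖
            ≤ ‖∑ μ, G β γ (E ν - E μ) • Pr μ‖ * ‖A * Pr ν‖ := h1
          _ ≤ c * (‖A‖ * ‖Pr ν‖) :=
              mul_le_mul h3 h2 (norm_nonneg _) hc
          _ ≤ c * (‖A‖ * 1) := by
              have h5 := mul_le_mul_of_nonneg_left h4 (norm_nonneg A)
              have h6 := mul_le_mul_of_nonneg_left h5 hc
              exact h6
          _ = c * ‖A‖ := by ring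
    _ = S.card * (c * ‖A‖) := by rw [Finset.sum_const, nsmul_eq_mul]
    _ = 4 * S.card / Real.sqrt π * (β / γ) * Real.exp (-(γ ^ 2 / (64 * β ^ 2))) * ‖A‖ := by
        rw [hc_def]; ring
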